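/- Let μ be quasi-infinitely divisible with characteristic triplet (0, ν, γ)_c. Then ∫_ℝ (1 ∧ |x|) ν⁺(dx) ≥ ∫_ℝ (1 ∧ |x|) ν⁻(dx). -/

import Mathlib

open MeasureTheory Complex Filter
open Set
open scoped ENNReal

noncomputable section

/-- Characteristic function of a measure on ℝ. -/
def charFn (μ : Measure ℝ) (z : ℝ) : ℂ := ∫ x, Complex.exp (Complex.I * z * x) ∂μ

/-- A representation function: bounded, Borel measurable, with (c x - x)/x² → 0 as x → 0. -/
def IsRepFn (c : ℝ → ℝ) : Prop :=
  Measurable c ∧ (∃ M : ℝ, ∀ x, |c x| ≤ M) ∧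
    Tendsto (fun x => (c x - x) / x ^ 2) (nhdsWithin 0 {(0:ℝ)}ᶜ) (nhds 0)

/-- The kernel g_c(x,z). -/
def gKer (c : ℝ → ℝ) (x z : ℝ) : ℂ :=
  if x = 0 then -(z:ℂ)^2 / 2
  else (Complex.exp (Complex.I * z * x) - 1 - Complex.I * z * c x) / ((min 1 (x^2) : ℝ) : ℂ)

/-- Quasi-infinitely divisible w.r.t. c: the characteristic function has a
Lévy–Khintchine type representation with a finite signed measure ζ = ζp - ζm
(given by its Jordan decomposition). -/
def IsQID (c : ℝ → ℝ) (μ : Measure ℝ) : Prop :=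
  ∃ γ : ℝ, ∃ ζp ζm : Measure ℝ, IsFiniteMeasure ζp ∧ IsFiniteMeasure ζm ∧
    Measure.MutuallySingular ζp ζm ∧
    ∀ z : ℝ, charFn μ z =
      Complex.exp (Complex.I * γ * z + (∫ x, gKer c x z ∂ζp) - ∫ x, gKer c x z ∂ζm)

/-- Infinitely divisible w.r.t. c: as above with a (positive) finite measure ζ. -/
def IsID (c : ℝ → ℝ) (μ : Measure ℝ) : Prop :=
  ∃ γ : ℝ, ∃ ζ : Measure ℝ, IsFiniteMeasure ζ ∧
    ∀ z : ℝ, charFn μ z = Complex.exp (Complex.I * γ * z + ∫ x, gKer c x z ∂ζ)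

/-- The Lévy–Khintchine integral ∫ (e^{izx} - 1 - izc(x)) dν. -/
def lkInt (c : ℝ → ℝ) (ν : Measure ℝ) (z : ℝ) : ℂ :=
  ∫ x, (Complex.exp (Complex.I * z * x) - 1 - Complex.I * z * c x) ∂ν

/-- μ has characteristic triplet (a, ν, γ) w.r.t. c, where the quasi-Lévy measure ν
is given by its Jordan decomposition ν = νp - νm. -/
def HasTriplet (c : ℝ → ℝ) (μ : Measure ℝ) (a : ℝ) (νp νm : Measure ℝ) (γ : ℝ) : Prop :=
  Measure.MutuallySingular νp νm ∧ νp {0} = 0 ∧ νm {0} = 0 ∧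
  (∫⁻ x, ENNReal.ofReal (min 1 (x^2)) ∂(νp + νm)) < ⊤ ∧
  ∀ z : ℝ, charFn μ z =
    Complex.exp (Complex.I * γ * z - a * z^2 / 2 + lkInt c νp z - lkInt c νm z)

lemma one_sub_cos_nonneg (t : ℝ) : 0 ≤ 1 - Real.cos t := by
  nlinarith [Real.cos_le_one t]

lemma one_sub_cos_le_sq (t : ℝ) : 1 - Real.cos t ≤ t ^ 2 / 2 := by
  have h1 : Real.sin (t/2) ^ 2 = 1/2 - Real.cos (2 * (t/2)) / 2 := Real.sin_sq_eq_half_sub _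
  have h2 : Real.sin (t/2) ^ 2 ≤ (t/2) ^ 2 := Real.sin_sq_le_sq
  have : (2:ℝ) * (t/2) = t := by ring
  rw [this] at h1
  nlinarith

lemma one_sub_cos_le_two (t : ℝ) : 1 - Real.cos t ≤ 2 := by
  nlinarith [Real.neg_one_le_cos t]

/-- integrand for J -/
def jfun (c : ℝ) (z : ℝ) : ℝ := (1 - Real.cos (c * z)) / z ^ 2

lemma jfun_nonneg (c z : ℝ) : 0 ≤ jfun c z := by
  exact div_nonneg (one_sub_cos_nonneg _) (sq_nonneg z)

lemma jfun_cont (c : ℝ) : ContinuousOn (jfun c) (Ioi 0) := by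
  apply ContinuousOn.div (by fun_prop) (by fun_prop)
  intro z hz; exact pow_ne_zero _ (ne_of_gt hz)

lemma jfun_integrable (c : ℝ) : IntegrableOn (jfun c) (Ioi 0) := by
  have h1 : IntegrableOn (jfun c) (Ioc 0 1) := by
    apply Integrable.mono' (integrable_const (c ^ 2 / 2)) ((jfun_cont c).aestronglyMeasurable measurableSet_Ioi |>.mono_measure (Measure.restrict_mono Ioc_subset_Ioi_self le_rfl))
    · filter_upwards [ae_restrict_mem measurableSet_Ioc] with z hz
      rw [Real.norm_of_nonneg (jfun_nonneg c z)]
      unfold jfun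
      rw [div_le_iff₀ (pow_pos hz.1 2)]
      calc 1 - Real.cos (c * z) ≤ (c * z)^2 / 2 := one_sub_cos_le_sq _
        _ ≤ c^2/2 * z^2 := by nlinarith [hz.2, hz.1, sq_nonneg c, sq_nonneg z]
  have h2 : IntegrableOn (jfun c) (Ioi 1) := by
    have hb : IntegrableOn (fun z : ℝ => 2 * z ^ (-2 : ℝ)) (Ioi 1) :=
      (integrableOn_Ioi_rpow_of_lt (by norm_num) one_pos).const_mul 2
    apply Integrable.mono' hb ((jfun_cont c).aestronglyMeasurable measurableSet_Ioi |>.mono_measure (Measure.restrict_mono (Ioi_subset_Ioi zero_le_one) le_rfl))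
    · filter_upwards [ae_restrict_mem measurableSet_Ioi] with z hz
      rw [Real.norm_of_nonneg (jfun_nonneg c z)]
      have hz1 : (1:ℝ) < z := hz
      have hz0 : (0:ℝ) < z := lt_trans one_pos hz1
      rw [Real.rpow_neg hz0.le, show (2:ℝ) = ((2:ℕ):ℝ) from by norm_num, Real.rpow_natCast]
      unfold jfun
      rw [div_le_iff₀ (by positivity)]
      have : z ^ (2:ℕ) ≠ 0 := by positivity
      field_simp
      linarith [one_sub_cos_le_two (c*z), show ((2:ℕ):ℝ) = 2 by norm_num]
  have : Ioi (0:ℝ) = Ioc 0 1 ∪ Ioi 1 := by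
    rw [Ioc_union_Ioi_eq_Ioi]; norm_num
  rw [this]
  exact h1.union h2

/-- J c = ∫_{z>0} (1-cos(cz))/z² dz -/
def J (c : ℝ) : ℝ := ∫ z in Ioi (0:ℝ), jfun c z

lemma J_nonneg (c : ℝ) : 0 ≤ J c :=
  setIntegral_nonneg measurableSet_Ioi (fun z _ => jfun_nonneg c z)

lemma J_neg (c : ℝ) : J (-c) = J c := by
  unfold J; congr 1; funext z; unfold jfun
  rw [neg_mul, Real.cos_neg]

lemma J_scale {c : ℝ} (hc : 0 < c) : J c = c * J 1 := by
  have key : ∀ z : ℝ, z ∈ Ioi (0:ℝ) → jfun c z = c ^ 2 * jfun 1 (c * z) := by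
    intro z hz
    unfold jfun
    rw [one_mul, mul_pow]
    rw [mul_div_assoc', mul_div_mul_left _ _ (by positivity : c^2 ≠ 0)]
  have h1 : J c = ∫ z in Ioi (0:ℝ), c ^ 2 * jfun 1 (c * z) := by
    exact setIntegral_congr_fun measurableSet_Ioi key
  rw [h1, MeasureTheory.integral_const_mul, integral_comp_mul_left_Ioi (jfun 1) 0 hc]
  rw [mul_zero]
  unfold J
  rw [smul_eq_mul]
  field_simp

lemma J_abs (c : ℝ) : J c = |c| * J 1 := by
  rcases lt_trichotomy c 0 with h | h | h
  · rw [← J_neg, J_scale (by linarith), abs_of_neg h]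
  · simp only [h, abs_zero, zero_mul]
    unfold J jfun
    simp
  · rw [J_scale h, abs_of_pos h]

lemma prod_decomp (x z : ℝ) :
    jfun 1 z * (1 - Real.cos (z * x)) =
      jfun 1 z + jfun x z - jfun (1 + x) z / 2 - jfun (1 - x) z / 2 := by
  unfold jfun
  rcases eq_or_ne z 0 with hz | hz
  · simp [hz]
  · rw [show (1 + x) * z = z + x * z by ring, show (1 - x) * z = z - x * z by ring,
      Real.cos_add, Real.cos_sub, mul_comm z x, one_mul]
    field_simp
    ring

lemma min_abs_identity (x : ℝ) :
    |(1:ℝ)| + |x| - |1 + x| / 2 - |1 - x| / 2 = min 1 |x| := by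
  rcases le_total 0 x with hx | hx
  · rcases le_total x 1 with h1 | h1
    · rw [abs_one, _root_.abs_of_nonneg hx, _root_.abs_of_nonneg (by linarith), _root_.abs_of_nonneg (by linarith),
        min_eq_right (by linarith)]
      ring
    · rw [abs_one, _root_.abs_of_nonneg hx, _root_.abs_of_nonneg (by linarith), _root_.abs_of_nonpos (by linarith),
        min_eq_left (by linarith)]
      ring
  · rcases le_total (-1) x with h1 | h1
    · rw [abs_one, _root_.abs_of_nonpos hx, _root_.abs_of_nonneg (by linarith), _root_.abs_of_nonneg (by linarith),
        min_eq_right (by linarith)]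
      ring
    · rw [abs_one, _root_.abs_of_nonpos hx, _root_.abs_of_nonpos (by linarith), _root_.abs_of_nonneg (by linarith),
        min_eq_left (by linarith)]
      ring

/-- The key computation: ∫_{z>0} (1-cos z)/z² (1-cos(zx)) dz = J 1 * min 1 |x|. -/
lemma key_integral (x : ℝ) :
    ∫ z in Ioi (0:ℝ), jfun 1 z * (1 - Real.cos (z * x)) = J 1 * min 1 |x| := by
  have : ∫ z in Ioi (0:ℝ), jfun 1 z * (1 - Real.cos (z * x)) =
      ∫ z in Ioi (0:ℝ), (jfun 1 z + jfun x z - jfun (1 + x) z / 2 - jfun (1 - x) z / 2) := by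
    congr 1; funext z; exact prod_decomp x z
  rw [this]
  have i1 : IntegrableOn (fun z : ℝ => jfun 1 z + jfun x z) (Ioi 0) :=
    (jfun_integrable 1).add (jfun_integrable x)
  have i2 : IntegrableOn (fun z : ℝ => jfun (1 + x) z / 2) (Ioi 0) :=
    (jfun_integrable (1 + x)).div_const 2
  have i3 : IntegrableOn (fun z : ℝ => jfun (1 - x) z / 2) (Ioi 0) :=
    (jfun_integrable (1 - x)).div_const 2
  have i12 : IntegrableOn (fun z : ℝ => jfun 1 z + jfun x z - jfun (1 + x) z / 2) (Ioi 0) :=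
    i1.sub i2
  rw [integral_sub i12 i3, integral_sub i1 i2,
      integral_add (jfun_integrable 1) (jfun_integrable x), integral_div, integral_div]
  show J 1 + J x - J (1 + x) / 2 - J (1 - x) / 2 = _
  rw [J_abs x, J_abs (1 + x), J_abs (1 - x), ← min_abs_identity x, abs_one]
  ring

lemma J_one_pos : 0 < J 1 := by
  have hsub : ∫ z in Ioc (1:ℝ) 3, jfun 1 z ≤ J 1 := by
    apply setIntegral_mono_set (jfun_integrable 1)
    · filter_upwards with z using jfun_nonneg 1 z
    · filter_upwards with z hz using lt_of_lt_of_le one_pos hz.1.le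
  have hpos : 0 < ∫ z in Ioc (1:ℝ) 3, jfun 1 z := by
    rw [← intervalIntegral.integral_of_le (by norm_num : (1:ℝ) ≤ 3)]
    apply intervalIntegral.intervalIntegral_pos_of_pos_on
    · rw [intervalIntegrable_iff_integrableOn_Ioc_of_le (by norm_num : (1:ℝ) ≤ 3)]
      exact (jfun_integrable 1).mono_set (fun z hz => lt_of_lt_of_le one_pos hz.1.le)
    · intro z hz
      have h1 : (0:ℝ) < z := lt_trans one_pos hz.1
      have h3 : z ≤ Real.pi := le_trans hz.2.le (by linarith [Real.pi_gt_three])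
      have : Real.cos z < 1 := by
        have := Real.cos_lt_cos_of_nonneg_of_le_pi le_rfl h3 h1
        rwa [Real.cos_zero] at this
      unfold jfun
      rw [one_mul]
      apply div_pos (by linarith) (pow_pos h1 2)
    · norm_num
  linarith

lemma key_integrable (x : ℝ) :
    IntegrableOn (fun z => jfun 1 z * (1 - Real.cos (z * x))) (Ioi (0:ℝ)) := by
  have : (fun z => jfun 1 z * (1 - Real.cos (z * x))) =
      fun z => jfun 1 z + jfun x z - jfun (1 + x) z / 2 - jfun (1 - x) z / 2 :=
    funext (prod_decomp x)
  rw [this]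
  exact (((jfun_integrable 1).add (jfun_integrable x)).sub
    ((jfun_integrable (1 + x)).div_const 2)).sub ((jfun_integrable (1 - x)).div_const 2)

lemma key_lintegral (x : ℝ) :
    ∫⁻ z in Ioi (0:ℝ), ENNReal.ofReal (jfun 1 z * (1 - Real.cos (z * x))) =
      ENNReal.ofReal (J 1) * ENNReal.ofReal (min 1 |x|) := by
  rw [← ENNReal.ofReal_mul (J_nonneg 1), ← key_integral x]
  rw [← ofReal_integral_eq_lintegral_ofReal (key_integrable x)]
  filter_upwards with z
  exact mul_nonneg (jfun_nonneg 1 z) (one_sub_cos_nonneg _)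

lemma sigmaFinite_of_levy (ν : Measure ℝ) (h0 : ν {0} = 0)
    (hfin : (∫⁻ x, ENNReal.ofReal (min 1 (x ^ 2)) ∂ν) < ⊤) : SigmaFinite ν := by
  set f : ℝ → ℝ≥0∞ := fun x => ENNReal.ofReal (min 1 (x ^ 2)) with hf
  have hfm : Measurable f := by
    apply ENNReal.measurable_ofReal.comp
    exact (measurable_const.min (measurable_id.pow_const 2))
  set A : ℕ → Set ℝ := fun n => {x | (1 / (n + 1) : ℝ≥0∞) ≤ f x} ∪ {0} with hA
  apply MeasureTheory.Measure.sigmaFinite_of_countable (Set.countable_range A)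
  · rintro s ⟨n, rfl⟩
    have h1 : ν {x | (1 / (n + 1) : ℝ≥0∞) ≤ f x} < ⊤ := by
      refine lt_of_le_of_lt (meas_ge_le_lintegral_div hfm.aemeasurable ?_ ?_) ?_
      · simp
      · simp
      · exact ENNReal.div_lt_top hfin.ne (by simp)
    calc ν (A n) ≤ ν {x | (1 / (n + 1) : ℝ≥0∞) ≤ f x} + ν {0} := measure_union_le _ _
      _ < ⊤ := by rw [h0, add_zero]; exact h1
  · rw [Set.sUnion_range]
    ext x
    simp only [Set.mem_iUnion, Set.mem_univ, iff_true]
    rcases eq_or_ne x 0 with rfl | hx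
    · exact ⟨0, Or.inr rfl⟩
    · have hpos : 0 < min 1 (x ^ 2) := lt_min one_pos (by positivity)
      obtain ⟨n, hn⟩ := exists_nat_one_div_lt hpos
      refine ⟨n, Or.inl ?_⟩
      show (1 / (n + 1) : ℝ≥0∞) ≤ f x
      rw [hf]
      calc (1 / (n + 1) : ℝ≥0∞) = ENNReal.ofReal (1 / (n + 1)) := by
            rw [ENNReal.ofReal_div_of_pos (by positivity), ENNReal.ofReal_one,
              ENNReal.ofReal_add (by positivity) zero_le_one, ENNReal.ofReal_natCast,
              ENNReal.ofReal_one]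
        _ ≤ ENNReal.ofReal (min 1 (x ^ 2)) := ENNReal.ofReal_le_ofReal hn.le

/-- A function dominated by a constant multiple of min 1 x² is integrable. -/
lemma integrable_min_one_sq (ν : Measure ℝ)
    (hfin : (∫⁻ x, ENNReal.ofReal (min 1 (x ^ 2)) ∂ν) < ⊤) {C : ℝ} (hC : 0 ≤ C) :
    Integrable (fun x => C * min 1 (x ^ 2)) ν := by
  have hm : Measurable fun x : ℝ => C * min 1 (x ^ 2) :=
    measurable_const.mul (measurable_const.min (measurable_id.pow_const 2))
  constructor
  · exact hm.aestronglyMeasurable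
  · rw [hasFiniteIntegral_iff_ofReal]
    · calc ∫⁻ x, ENNReal.ofReal (C * min 1 (x ^ 2)) ∂ν
          = ∫⁻ x, ENNReal.ofReal C * ENNReal.ofReal (min 1 (x ^ 2)) ∂ν := by
            congr 1; funext x
            exact ENNReal.ofReal_mul hC
        _ = ENNReal.ofReal C * ∫⁻ x, ENNReal.ofReal (min 1 (x ^ 2)) ∂ν := by
            rw [lintegral_const_mul]
            exact ENNReal.measurable_ofReal.comp
              (measurable_const.min (measurable_id.pow_const 2))
        _ < ⊤ := ENNReal.mul_lt_top ENNReal.ofReal_lt_top hfin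
    · filter_upwards with x
      have : (0:ℝ) ≤ min 1 (x ^ 2) := le_min zero_le_one (sq_nonneg x)
      positivity

lemma lk_meas {c : ℝ → ℝ} (hc : Measurable c) (ν : Measure ℝ) (z : ℝ) :
    AEStronglyMeasurable
      (fun x : ℝ => Complex.exp (Complex.I * z * x) - 1 - Complex.I * z * c x) ν := by
  apply Measurable.aestronglyMeasurable
  have h1 : Measurable fun x : ℝ => Complex.exp (Complex.I * z * x) :=
    (Complex.continuous_exp.comp (by continuity)).measurable
  have h2 : Measurable fun x : ℝ => Complex.I * z * (c x : ℂ) :=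
    (Complex.measurable_ofReal.comp hc).const_mul _
  exact (h1.sub measurable_const).sub h2


lemma lk_integrable {c : ℝ → ℝ} (hc : IsRepFn c) {ν : Measure ℝ} (h0 : ν {0} = 0)
    (hfin : (∫⁻ x, ENNReal.ofReal (min 1 (x ^ 2)) ∂ν) < ⊤) (z : ℝ) :
    Integrable (fun x : ℝ => Complex.exp (Complex.I * z * x) - 1 - Complex.I * z * c x) ν := by
  obtain ⟨hcm, ⟨M, hM⟩, htend⟩ := hc
  have hM0 : 0 ≤ M := le_trans (abs_nonneg _) (hM 0)
  obtain ⟨δ, hδ0, hδ⟩ : ∃ δ > 0, ∀ x : ℝ, x ≠ 0 → |x| < δ → |c x - x| ≤ x ^ 2 := by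
    obtain ⟨δ, hδ0, hδ⟩ := Metric.tendsto_nhdsWithin_nhds.mp htend 1 one_pos
    refine ⟨δ, hδ0, fun x hx hxδ => ?_⟩
    have := hδ (by simpa using hx) (by simpa [Real.dist_eq] using hxδ)
    rw [Real.dist_eq, sub_zero, abs_div, _root_.abs_pow, _root_.sq_abs] at this
    have hx2 : (0:ℝ) < x ^ 2 := by positivity
    rw [div_lt_one hx2] at this
    exact this.le
  set δ' : ℝ := min δ (1 / (|z| + 1)) with hδ'def
  have hδ'0 : 0 < δ' := lt_min hδ0 (by positivity)
  set C1 : ℝ := z ^ 2 + |z| with hC1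
  set C2 : ℝ := (2 + |z| * M) / min 1 (δ' ^ 2) with hC2
  have hmd : (0:ℝ) < min 1 (δ' ^ 2) := lt_min one_pos (by positivity)
  have hC10 : 0 ≤ C1 := by positivity
  have hC20 : 0 ≤ C2 := by positivity
  set C : ℝ := max C1 C2 with hCdef
  have hC0 : 0 ≤ C := le_trans hC10 (le_max_left _ _)
  apply Integrable.mono' (integrable_min_one_sq ν hfin hC0) (lk_meas hcm ν z)
  have hae : ∀ᵐ x ∂ν, x ≠ 0 := by
    rw [ae_iff]
    simpa using h0
  filter_upwards [hae] with x hx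
  have hmin0 : (0:ℝ) ≤ min 1 (x ^ 2) := le_min zero_le_one (sq_nonneg x)
  have key : Complex.exp (Complex.I * z * x) - 1 - Complex.I * z * c x =
      (Complex.exp (Complex.I * z * x) - 1 - Complex.I * z * x)
        + Complex.I * z * ((x : ℂ) - (c x : ℂ)) := by ring
  rw [key]
  rcases lt_or_ge |x| δ' with hsmall | hbig
  · have hxδ : |x| < δ := lt_of_lt_of_le hsmall (min_le_left _ _)
    have hxz : |x| ≤ 1 / (|z| + 1) := le_of_lt (lt_of_lt_of_le hsmall (min_le_right _ _))
    have habs : ‖Complex.I * z * x‖ = |z| * |x| := by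
      rw [norm_mul, norm_mul, Complex.norm_I, one_mul, Complex.norm_real, Complex.norm_real, Real.norm_eq_abs, Real.norm_eq_abs]
    have hle1 : ‖Complex.I * z * x‖ ≤ 1 := by
      rw [habs]
      calc |z| * |x| ≤ |z| * (1 / (|z| + 1)) :=
            mul_le_mul_of_nonneg_left hxz (abs_nonneg z)
        _ ≤ 1 := by
            rw [mul_one_div, div_le_one (by positivity)]
            linarith [abs_nonneg z]
    have t1 : ‖Complex.exp (Complex.I * z * x) - 1 - Complex.I * z * x‖
        ≤ z ^ 2 * x ^ 2 := by
      calc ‖_‖ ≤ ‖Complex.I * z * x‖ ^ 2 :=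
            Complex.norm_exp_sub_one_sub_id_le hle1
        _ = z ^ 2 * x ^ 2 := by rw [habs, mul_pow, _root_.sq_abs, _root_.sq_abs]
    have t2 : ‖Complex.I * z * ((x : ℂ) - (c x : ℂ))‖ ≤ |z| * x ^ 2 := by
      rw [show ((x : ℂ) - (c x : ℂ)) = ((x - c x : ℝ) : ℂ) by push_cast; ring]
      rw [norm_mul, norm_mul, Complex.norm_I, one_mul, Complex.norm_real, Complex.norm_real, Real.norm_eq_abs, Real.norm_eq_abs]
      have : |x - c x| ≤ x ^ 2 := by rw [abs_sub_comm]; exact hδ x hx hxδ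
      exact mul_le_mul_of_nonneg_left this (abs_nonneg z)
    have habs1 : |x| ≤ 1 := by
      calc |x| ≤ 1 / (|z| + 1) := hxz
        _ ≤ 1 := by rw [div_le_one (by positivity)]; linarith [abs_nonneg z]
    have hx1 : x ^ 2 ≤ 1 := by
      rw [← _root_.sq_abs x]
      exact pow_le_one₀ (abs_nonneg x) habs1
    have hminx : min 1 (x ^ 2) = x ^ 2 := min_eq_right hx1
    calc ‖_ + _‖ ≤ ‖_‖ + ‖_‖ := norm_add_le _ _
      _ ≤ z ^ 2 * x ^ 2 + |z| * x ^ 2 := by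
          exact add_le_add t1 t2
      _ = C1 * min 1 (x ^ 2) := by rw [hminx]; ring
      _ ≤ C * min 1 (x ^ 2) := mul_le_mul_of_nonneg_right (le_max_left _ _) hmin0
  · have nexp : ‖Complex.exp (Complex.I * z * x)‖ = 1 := by
      rw [Complex.norm_exp]
      have : (Complex.I * z * x).re = 0 := by simp
      rw [this, Real.exp_zero]
    have ncx : ‖Complex.I * (z:ℂ) * (c x : ℂ)‖ ≤ |z| * M := by
      rw [norm_mul, norm_mul, Complex.norm_I, one_mul, Complex.norm_real, Complex.norm_real, Real.norm_eq_abs, Real.norm_eq_abs]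
      exact mul_le_mul_of_nonneg_left (hM x) (abs_nonneg z)
    have expand : (Complex.exp (Complex.I * z * x) - 1 - Complex.I * z * x)
        + Complex.I * z * ((x : ℂ) - (c x : ℂ))
        = Complex.exp (Complex.I * z * x) - 1 - Complex.I * z * (c x : ℂ) := by ring
    have t1 : ‖(Complex.exp (Complex.I * z * x) - 1 - Complex.I * z * x)
        + Complex.I * z * ((x : ℂ) - (c x : ℂ))‖ ≤ 2 + |z| * M := by
      rw [expand]
      calc ‖Complex.exp (Complex.I * z * x) - 1 - Complex.I * z * (c x : ℂ)‖
          ≤ ‖Complex.exp (Complex.I * z * x) - 1‖ + ‖Complex.I * (z:ℂ) * (c x : ℂ)‖ :=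
            norm_sub_le _ _
        _ ≤ (‖Complex.exp (Complex.I * z * x)‖ + ‖(1:ℂ)‖) + ‖Complex.I * (z:ℂ) * (c x : ℂ)‖ :=
            add_le_add_left (norm_sub_le _ _) _
        _ ≤ 2 + |z| * M := by rw [nexp, norm_one]; linarith [ncx]
    have hmono : min 1 (δ' ^ 2) ≤ min 1 (x ^ 2) := by
      apply min_le_min le_rfl
      nlinarith [abs_nonneg x, _root_.sq_abs x]
    calc ‖_ + _‖ ≤ 2 + |z| * M := t1
      _ = C2 * min 1 (δ' ^ 2) := by rw [hC2]; field_simp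
      _ ≤ C2 * min 1 (x ^ 2) := mul_le_mul_of_nonneg_left hmono hC20
      _ ≤ C * min 1 (x ^ 2) := mul_le_mul_of_nonneg_right (le_max_right _ _) hmin0

lemma lk_re {c : ℝ → ℝ} (hc : IsRepFn c) {ν : Measure ℝ} (h0 : ν {0} = 0)
    (hfin : (∫⁻ x, ENNReal.ofReal (min 1 (x ^ 2)) ∂ν) < ⊤) (z : ℝ) :
    (lkInt c ν z).re = ∫ x, (Real.cos (z * x) - 1) ∂ν := by
  have hint := lk_integrable hc h0 hfin z
  unfold lkInt
  rw [show (∫ x, (Complex.exp (Complex.I * z * x) - 1 - Complex.I * z * c x) ∂ν).re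
      = RCLike.re (∫ x, (Complex.exp (Complex.I * z * x) - 1 - Complex.I * z * c x) ∂ν) from rfl,
    ← integral_re hint]
  congr 1
  funext x
  have : (Complex.exp (Complex.I * z * x) - 1 - Complex.I * z * c x).re
      = Real.cos (z * x) - 1 := by
    have h1 : (Complex.I * (z:ℂ) * (x:ℂ)).re = 0 := by simp
    have h2 : (Complex.I * (z:ℂ) * (x:ℂ)).im = z * x := by simp
    rw [Complex.sub_re, Complex.sub_re, Complex.exp_re, h1, h2, Real.exp_zero, one_mul,
      Complex.one_re]
    have h3 : (Complex.I * (z:ℂ) * ((c x):ℂ)).re = 0 := by simp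
    rw [h3]
    ring
  rw [← this]
  rfl

lemma cos_integrable (ν : Measure ℝ)
    (hfin : (∫⁻ x, ENNReal.ofReal (min 1 (x ^ 2)) ∂ν) < ⊤) (z : ℝ) :
    Integrable (fun x => 1 - Real.cos (z * x)) ν := by
  have hC0 : (0:ℝ) ≤ max (z ^ 2 / 2) 2 := le_trans zero_le_two (le_max_right _ _)
  apply Integrable.mono' (integrable_min_one_sq ν hfin hC0)
  · exact (Continuous.aestronglyMeasurable (by continuity))
  filter_upwards with x
  rw [Real.norm_of_nonneg (one_sub_cos_nonneg _)]
  rcases le_total (x ^ 2) 1 with h | h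
  · rw [min_eq_right h]
    calc 1 - Real.cos (z * x) ≤ (z * x) ^ 2 / 2 := one_sub_cos_le_sq _
      _ = z ^ 2 / 2 * x ^ 2 := by ring
      _ ≤ max (z ^ 2 / 2) 2 * x ^ 2 :=
          mul_le_mul_of_nonneg_right (le_max_left _ _) (sq_nonneg x)
  · rw [min_eq_left h]
    calc 1 - Real.cos (z * x) ≤ 2 := one_sub_cos_le_two _
      _ = 2 * 1 := (mul_one 2).symm
      _ ≤ max (z ^ 2 / 2) 2 * 1 := by
          apply mul_le_mul_of_nonneg_right (le_max_right _ _) zero_le_one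

lemma cos_lintegral (ν : Measure ℝ)
    (hfin : (∫⁻ x, ENNReal.ofReal (min 1 (x ^ 2)) ∂ν) < ⊤) (z : ℝ) :
    ∫⁻ x, ENNReal.ofReal (1 - Real.cos (z * x)) ∂ν
      = ENNReal.ofReal (∫ x, (1 - Real.cos (z * x)) ∂ν) :=
  (ofReal_integral_eq_lintegral_ofReal (cos_integrable ν hfin z)
    (by filter_upwards with x using one_sub_cos_nonneg _)).symm

/-- if the Gaussian variance is zero, then
∫ (1 ∧ |x|) dν⁺ ≥ ∫ (1 ∧ |x|) dν⁻. -/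
theorem stmt5 (c : ℝ → ℝ) (hc : IsRepFn c) (μ : Measure ℝ) [IsProbabilityMeasure μ]
    (γ : ℝ) (νp νm : Measure ℝ) (h : HasTriplet c μ 0 νp νm γ) :
    (∫⁻ x, ENNReal.ofReal (min 1 |x|) ∂νm) ≤ ∫⁻ x, ENNReal.ofReal (min 1 |x|) ∂νp := by
  obtain ⟨hsing, h0p, h0m, hfin, heq⟩ := h
  rw [lintegral_add_measure] at hfin
  have hfinp : (∫⁻ x, ENNReal.ofReal (min 1 (x ^ 2)) ∂νp) < ⊤ :=
    lt_of_le_of_lt le_self_add hfin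
  have hfinm : (∫⁻ x, ENNReal.ofReal (min 1 (x ^ 2)) ∂νm) < ⊤ :=
    lt_of_le_of_lt le_add_self hfin
  -- Step 1: for every z, ∫(1-cos zx) dνm ≤ ∫(1-cos zx) dνp
  have step1 : ∀ z : ℝ, ∫ x, (1 - Real.cos (z * x)) ∂νm ≤ ∫ x, (1 - Real.cos (z * x)) ∂νp := by
    intro z
    have habs : ‖charFn μ z‖ ≤ 1 := by
      unfold charFn
      calc ‖∫ x, Complex.exp (Complex.I * z * x) ∂μ‖ ≤ 1 * (μ Set.univ).toReal := by
            apply norm_integral_le_of_norm_le_const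
            filter_upwards with x
            rw [Complex.norm_exp]
            have : (Complex.I * (z:ℂ) * (x:ℂ)).re = 0 := by simp
            rw [this, Real.exp_zero]
        _ = 1 := by simp
    rw [heq z, Complex.norm_exp, Real.exp_le_one_iff] at habs
    have hre : (Complex.I * (γ:ℂ) * (z:ℂ) - ((0:ℝ):ℂ) * (z:ℂ) ^ 2 / 2 + lkInt c νp z
        - lkInt c νm z).re = (lkInt c νp z).re - (lkInt c νm z).re := by
      simp [Complex.add_re, Complex.sub_re]
    rw [hre, lk_re hc h0p hfinp z, lk_re hc h0m hfinm z] at habs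
    have hp := cos_integrable νp hfinp z
    have hm := cos_integrable νm hfinm z
    have eqp : ∫ x, (Real.cos (z * x) - 1) ∂νp = -∫ x, (1 - Real.cos (z * x)) ∂νp := by
      rw [← integral_neg]; congr 1; funext x; ring
    have eqm : ∫ x, (Real.cos (z * x) - 1) ∂νm = -∫ x, (1 - Real.cos (z * x)) ∂νm := by
      rw [← integral_neg]; congr 1; funext x; ring
    rw [eqp, eqm] at habs
    linarith
  -- Step 2: lintegral version
  have step2 : ∀ z : ℝ, ∫⁻ x, ENNReal.ofReal (1 - Real.cos (z * x)) ∂νm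
      ≤ ∫⁻ x, ENNReal.ofReal (1 - Real.cos (z * x)) ∂νp := by
    intro z
    rw [cos_lintegral νm hfinm z, cos_lintegral νp hfinp z]
    exact ENNReal.ofReal_le_ofReal (step1 z)
  -- Step 3: Tonelli
  haveI : SigmaFinite νp := sigmaFinite_of_levy νp h0p hfinp
  haveI : SigmaFinite νm := sigmaFinite_of_levy νm h0m hfinm
  set f : ℝ → ℝ → ℝ≥0∞ := fun z x => ENNReal.ofReal (jfun 1 z * (1 - Real.cos (z * x)))
    with hfdef
  have hmeas : Measurable (Function.uncurry f) := by
    apply ENNReal.measurable_ofReal.comp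
    have m1 : Measurable fun z : ℝ => jfun 1 z := by
      unfold jfun
      exact (measurable_const.sub (Real.continuous_cos.measurable.comp
        (measurable_const.mul measurable_id))).div (measurable_id.pow_const 2)
    have m2 : Measurable fun p : ℝ × ℝ => 1 - Real.cos (p.1 * p.2) :=
      measurable_const.sub (Real.continuous_cos.measurable.comp
        (measurable_fst.mul measurable_snd))
    exact (m1.comp measurable_fst).mul m2
  have mcos : ∀ ν : Measure ℝ, ∀ z : ℝ, ∫⁻ x, f z x ∂ν
      = ENNReal.ofReal (jfun 1 z) * ∫⁻ x, ENNReal.ofReal (1 - Real.cos (z * x)) ∂ν := by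
    intro ν z
    have hmz : Measurable fun x : ℝ => ENNReal.ofReal (1 - Real.cos (z * x)) := by
      apply ENNReal.measurable_ofReal.comp
      exact measurable_const.sub (Real.continuous_cos.measurable.comp
        (measurable_id.const_mul z))
    calc ∫⁻ x, f z x ∂ν
        = ∫⁻ x, ENNReal.ofReal (jfun 1 z) * ENNReal.ofReal (1 - Real.cos (z * x)) ∂ν := by
          apply lintegral_congr; intro x
          exact ENNReal.ofReal_mul (jfun_nonneg 1 z)
      _ = _ := lintegral_const_mul _ hmz
  have tonelli : ∀ ν : Measure ℝ, SigmaFinite ν →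
      ∫⁻ x, ENNReal.ofReal (J 1) * ENNReal.ofReal (min 1 |x|) ∂ν
        = ∫⁻ z in Ioi (0:ℝ), ENNReal.ofReal (jfun 1 z)
            * ∫⁻ x, ENNReal.ofReal (1 - Real.cos (z * x)) ∂ν ∂(volume) := by
    intro ν hsf
    haveI := hsf
    calc ∫⁻ x, ENNReal.ofReal (J 1) * ENNReal.ofReal (min 1 |x|) ∂ν
        = ∫⁻ x, ∫⁻ z in Ioi (0:ℝ), f z x ∂(volume) ∂ν := by
          congr 1; funext x
          rw [hfdef, key_lintegral x]
      _ = ∫⁻ z in Ioi (0:ℝ), ∫⁻ x, f z x ∂ν ∂(volume) :=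
          (lintegral_lintegral_swap (hmeas.aemeasurable)).symm
      _ = _ := by
          apply lintegral_congr
          intro z
          exact mcos ν z
  have main : ∫⁻ x, ENNReal.ofReal (J 1) * ENNReal.ofReal (min 1 |x|) ∂νm
      ≤ ∫⁻ x, ENNReal.ofReal (J 1) * ENNReal.ofReal (min 1 |x|) ∂νp := by
    rw [tonelli νm inferInstance, tonelli νp inferInstance]
    apply lintegral_mono
    intro z
    exact mul_le_mul_right (step2 z) _
  have hmm : Measurable fun x : ℝ => ENNReal.ofReal (min 1 |x|) := by
    apply ENNReal.measurable_ofReal.comp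
    exact measurable_const.min measurable_abs
  rw [lintegral_const_mul _ hmm, lintegral_const_mul _ hmm] at main
  have hJ : ENNReal.ofReal (J 1) ≠ 0 := by
    simp [ENNReal.ofReal_eq_zero, not_le, J_one_pos]
  exact (ENNReal.mul_le_mul_iff_right hJ ENNReal.ofReal_ne_top).mp main
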